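/- arXiv:2505.06229 — 4 statements merged into one kernel-verified Lean document; each statement's English description precedes it below -/
import Mathlib

section
/- Let x₀ < x₁ < ⋯ < x_N be a partition of [a,b] = [x₀, x_N], and for each i ∈ {1,…,N} let L_i : [a,b] → [x_{i-1}, x_i] be a homeomorphism with L_i(x₀) = x_{i-1} and L_i(x_N) = x_i. Let F_i : [a,b] × ℝ → ℝ be continuous and satisfy |F_i(x,y) - F_i(x,z)| ≤ |α_i| |y - z| for all x, y, z, where |α_i| ≤ κ < 1, together with F_i(x₀, y₀) = y_{i-1} and F_i(x_N, y_N) = y_i for given values y₀,…,y_N. Then the Read–Bajraktarević operator T, defined on X = {φ ∈ C[a,b] : φ(x₀) = y₀, φ(x_N) = y_N} by (Tφ)(x) = F_i(L_i⁻¹(x), φ(L_i⁻¹(x))) for x ∈ [x_{i-1}, x_i], is a well-defined contraction map on X with Lipschitz constant at most max_i |α_i| < 1. -/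
/-- The Read–Bajraktarević operator is a well-defined contraction on
`X = {φ ∈ C[a,b] : φ(x₀) = y₀, φ(x_N) = y_N}` (here the partition has `N+1` subintervals,
indexed by `i : Fin (N+1)`, with points `x : Fin (N+2) → ℝ`). -/
theorem stmt_4 (a b : ℝ) (hab : a < b) (N : ℕ)
    (x : Fin (N + 2) → ℝ) (hxmono : StrictMono x)
    (hx0 : x 0 = a) (hxN : x (Fin.last (N + 1)) = b)
    (y : Fin (N + 2) → ℝ)
    (L : Fin (N + 1) → ℝ → ℝ) (Linv : Fin (N + 1) → ℝ → ℝ)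
    (hLcont : ∀ i, ContinuousOn (L i) (Set.Icc a b))
    (hLmaps : ∀ i, Set.MapsTo (L i) (Set.Icc a b) (Set.Icc (x i.castSucc) (x i.succ)))
    (hLa : ∀ i, L i a = x i.castSucc) (hLb : ∀ i, L i b = x i.succ)
    (hLinvcont : ∀ i, ContinuousOn (Linv i) (Set.Icc (x i.castSucc) (x i.succ)))
    (hLinvmaps : ∀ i, Set.MapsTo (Linv i) (Set.Icc (x i.castSucc) (x i.succ)) (Set.Icc a b))
    (hLinvL : ∀ i, ∀ t ∈ Set.Icc a b, Linv i (L i t) = t)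
    (hLLinv : ∀ i, ∀ s ∈ Set.Icc (x i.castSucc) (x i.succ), L i (Linv i s) = s)
    (F : Fin (N + 1) → ℝ → ℝ → ℝ)
    (hFcont : ∀ i, ContinuousOn (fun p : ℝ × ℝ => F i p.1 p.2)
      (Set.Icc a b ×ˢ (Set.univ : Set ℝ)))
    (α : Fin (N + 1) → ℝ) (κ : ℝ) (hκ : κ < 1) (hα : ∀ i, |α i| ≤ κ)
    (hFlip : ∀ i (u v w : ℝ), |F i u v - F i u w| ≤ |α i| * |v - w|)
    (hFa : ∀ i, F i a (y 0) = y i.castSucc)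
    (hFb : ∀ i, F i b (y (Fin.last (N + 1))) = y i.succ) :
    ∃ T : (ℝ → ℝ) → (ℝ → ℝ),
      (∀ φ : ℝ → ℝ,
        (ContinuousOn φ (Set.Icc a b) ∧ φ a = y 0 ∧ φ b = y (Fin.last (N + 1))) →
        ((ContinuousOn (T φ) (Set.Icc a b) ∧ T φ a = y 0 ∧ T φ b = y (Fin.last (N + 1))) ∧
          ∀ i : Fin (N + 1), ∀ s ∈ Set.Icc (x i.castSucc) (x i.succ),
            T φ s = F i (Linv i s) (φ (Linv i s)))) ∧
      (∀ φ ψ : ℝ → ℝ,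
        (ContinuousOn φ (Set.Icc a b) ∧ φ a = y 0 ∧ φ b = y (Fin.last (N + 1))) →
        (ContinuousOn ψ (Set.Icc a b) ∧ ψ a = y 0 ∧ ψ b = y (Fin.last (N + 1))) →
        ∀ C : ℝ, (∀ t ∈ Set.Icc a b, |φ t - ψ t| ≤ C) →
          ∀ s ∈ Set.Icc a b, |T φ s - T ψ s| ≤ κ * C) := by
  classical
  have hmem_ab : a ∈ Set.Icc a b := ⟨le_refl a, hab.le⟩
  have hmem_ba : b ∈ Set.Icc a b := ⟨hab.le, le_refl b⟩
  -- each subinterval lies in [a,b]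
  have hsub : ∀ i : Fin (N + 1),
      Set.Icc (x i.castSucc) (x i.succ) ⊆ Set.Icc a b := by
    intro i s hs
    constructor
    · calc a = x 0 := hx0.symm
        _ ≤ x i.castSucc := hxmono.monotone (Fin.zero_le _)
        _ ≤ s := hs.1
    · calc s ≤ x i.succ := hs.2
        _ ≤ x (Fin.last (N + 1)) := hxmono.monotone (Fin.le_last _)
        _ = b := hxN
  -- cover
  have hcover : ∀ s ∈ Set.Icc a b, ∃ i : Fin (N + 1),
      s ∈ Set.Icc (x i.castSucc) (x i.succ) := by
    intro s hs
    set t : Finset (Fin (N + 2)) := Finset.univ.filter fun j => x j ≤ s with ht_def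
    have ht : t.Nonempty := ⟨0, by simp [ht_def, hx0, hs.1]⟩
    set j := t.max' ht with hj_def
    have hjx : x j ≤ s := by
      have := t.max'_mem ht
      simpa [ht_def] using this
    by_cases hjl : j = Fin.last (N + 1)
    · -- then s = b
      have hsb : s = b := le_antisymm hs.2 (by rw [← hxN, ← hjl]; exact hjx)
      refine ⟨Fin.last N, ?_, ?_⟩
      · rw [hsb, ← hxN]
        exact hxmono.monotone (Fin.le_last _)
      · rw [hsb, Fin.succ_last, hxN]
    · have hjlt : j.val < N + 1 := by
        rcases lt_or_eq_of_le (Nat.lt_succ_iff.mp j.isLt) with h | h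
        · exact h
        · exact absurd (Fin.ext h : j = Fin.last (N + 1)) hjl
      refine ⟨⟨j.val, hjlt⟩, ?_, ?_⟩
      · have : (⟨j.val, hjlt⟩ : Fin (N + 1)).castSucc = j := by
          apply Fin.ext; rfl
        rw [this]; exact hjx
      · by_contra hcon
        push_neg at hcon
        have hmem : (⟨j.val, hjlt⟩ : Fin (N + 1)).succ ∈ t := by
          simp only [ht_def, Finset.mem_filter, Finset.mem_univ, true_and]
          exact hcon.le
        have := t.le_max' _ hmem
        rw [← hj_def] at this
        have : (j.val + 1 : ℕ) ≤ j.val := this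
        omega
  -- junction agreement
  have hjoin : ∀ (φ : ℝ → ℝ), φ a = y 0 → φ b = y (Fin.last (N + 1)) →
      ∀ i j : Fin (N + 1), i < j → ∀ s,
      s ∈ Set.Icc (x i.castSucc) (x i.succ) → s ∈ Set.Icc (x j.castSucc) (x j.succ) →
      F i (Linv i s) (φ (Linv i s)) = F j (Linv j s) (φ (Linv j s)) := by
    intro φ hφa hφb i j hij s hsi hsj
    have hle : i.succ ≤ j.castSucc := by
      simp only [Fin.le_def, Fin.lt_def, Fin.val_succ, Fin.coe_castSucc] at *
      omega
    have h1 : s = x i.succ :=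
      le_antisymm hsi.2 (le_trans (hxmono.monotone hle) hsj.1)
    have h2 : s = x j.castSucc :=
      le_antisymm (h1 ▸ hxmono.monotone hle) hsj.1
    have hLinvb : Linv i s = b := by
      rw [h1, ← hLb i, hLinvL i b hmem_ba]
    have hLinva : Linv j s = a := by
      rw [h2, ← hLa j, hLinvL j a hmem_ab]
    have heq : i.succ = j.castSucc := hxmono.injective (h1 ▸ h2)
    rw [hLinvb, hLinva, hφa, hφb, hFa, hFb, heq]
  have hgood : ∀ (φ : ℝ → ℝ), φ a = y 0 → φ b = y (Fin.last (N + 1)) →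
      ∀ i j : Fin (N + 1), ∀ s,
      s ∈ Set.Icc (x i.castSucc) (x i.succ) → s ∈ Set.Icc (x j.castSucc) (x j.succ) →
      F i (Linv i s) (φ (Linv i s)) = F j (Linv j s) (φ (Linv j s)) := by
    intro φ hφa hφb i j s hsi hsj
    rcases lt_trichotomy i j with h | h | h
    · exact hjoin φ hφa hφb i j h s hsi hsj
    · rw [h]
    · exact (hjoin φ hφa hφb j i h s hsj hsi).symm
  -- the operator
  refine ⟨fun φ s =>
    if h : ∃ i : Fin (N + 1), s ∈ Set.Icc (x i.castSucc) (x i.succ) then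
      F h.choose (Linv h.choose s) (φ (Linv h.choose s)) else 0, ?_, ?_⟩
  · rintro φ ⟨hφc, hφa, hφb⟩
    have hTeq : ∀ i : Fin (N + 1), ∀ s ∈ Set.Icc (x i.castSucc) (x i.succ),
        (if h : ∃ i : Fin (N + 1), s ∈ Set.Icc (x i.castSucc) (x i.succ) then
          F h.choose (Linv h.choose s) (φ (Linv h.choose s)) else 0)
          = F i (Linv i s) (φ (Linv i s)) := by
      intro i s hs
      have h : ∃ i : Fin (N + 1), s ∈ Set.Icc (x i.castSucc) (x i.succ) := ⟨i, hs⟩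
      rw [dif_pos h]
      exact hgood φ hφa hφb h.choose i s h.choose_spec hs
    refine ⟨⟨?_, ?_, ?_⟩, hTeq⟩
    · -- continuity
      have hUnion : Set.Icc a b =
          ⋃ i : Fin (N + 1), Set.Icc (x i.castSucc) (x i.succ) := by
        apply Set.Subset.antisymm
        · intro s hs
          obtain ⟨i, hi⟩ := hcover s hs
          exact Set.mem_iUnion.2 ⟨i, hi⟩
        · exact Set.iUnion_subset hsub
      rw [hUnion]
      apply LocallyFinite.continuousOn_iUnion (locallyFinite_of_finite _)
        (fun i => isClosed_Icc)
      intro i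
      have hpiece : ContinuousOn (fun s => F i (Linv i s) (φ (Linv i s)))
          (Set.Icc (x i.castSucc) (x i.succ)) := by
        apply (hFcont i).comp
          ((hLinvcont i).prodMk ((hφc.comp (hLinvcont i) (hLinvmaps i))))
        intro s hs
        exact ⟨hLinvmaps i hs, trivial⟩
      exact hpiece.congr (fun s hs => hTeq i s hs)
    · -- value at a
      have ha0 : a ∈ Set.Icc (x (0 : Fin (N + 1)).castSucc) (x (0 : Fin (N + 1)).succ) := by
        constructor
        · rw [Fin.castSucc_zero, hx0]
        · rw [← hx0]
          exact hxmono.monotone (Fin.zero_le _)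
      beta_reduce
      rw [hTeq 0 a ha0]
      have : Linv 0 a = a := by
        conv_lhs => rw [show a = L 0 a by rw [hLa, Fin.castSucc_zero, hx0]]
        exact hLinvL 0 a hmem_ab
      rw [this, hφa, hFa, Fin.castSucc_zero]
    · -- value at b
      have hbl : b ∈ Set.Icc (x (Fin.last N).castSucc) (x (Fin.last N).succ) := by
        constructor
        · rw [← hxN]
          exact hxmono.monotone (Fin.le_last _)
        · rw [Fin.succ_last, hxN]
      beta_reduce
      rw [hTeq (Fin.last N) b hbl]
      have : Linv (Fin.last N) b = b := by
        conv_lhs => rw [show b = L (Fin.last N) b by rw [hLb, Fin.succ_last, hxN]]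
        exact hLinvL (Fin.last N) b hmem_ba
      rw [this, hφb, hFb, Fin.succ_last]
  · -- contraction
    rintro φ ψ ⟨hφc, hφa, hφb⟩ ⟨hψc, hψa, hψb⟩ C hC s hs
    obtain ⟨i, hi⟩ := hcover s hs
    have h : ∃ i : Fin (N + 1), s ∈ Set.Icc (x i.castSucc) (x i.succ) := ⟨i, hi⟩
    beta_reduce
    rw [dif_pos h, dif_pos h]
    set j := h.choose with hj
    have hu : Linv j s ∈ Set.Icc a b := hLinvmaps j h.choose_spec
    calc |F j (Linv j s) (φ (Linv j s)) - F j (Linv j s) (ψ (Linv j s))|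
        ≤ |α j| * |φ (Linv j s) - ψ (Linv j s)| := hFlip j _ _ _
      _ ≤ κ * C := by
          apply mul_le_mul (hα j) (hC _ hu) (abs_nonneg _)
            ((abs_nonneg (α j)).trans (hα j))
end

section
/- Under the hypotheses of the Read–Bajraktarević operator setup (T a contraction on the complete metric space X with factor |α|∞ = max_i |α_i| < 1), T admits a unique fixed point φ^α ∈ X, which satisfies the self-referential equation φ^α(x) = F_i(L_i⁻¹(x), φ^α(L_i⁻¹(x))) for all x ∈ [x_{i-1}, x_i] and all i, and interpolates the data: φ^α(x_i) = y_i for all i = 0, 1, …, N. -/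
/-- The RB operator admits a unique fixed point `φα` in `X`, which satisfies the
self-referential equation and interpolates the data `(x j, y j)`. -/
theorem stmt_5 (a b : ℝ) (hab : a < b) (N : ℕ)
    (x : Fin (N + 2) → ℝ) (hxmono : StrictMono x)
    (hx0 : x 0 = a) (hxN : x (Fin.last (N + 1)) = b)
    (y : Fin (N + 2) → ℝ)
    (L : Fin (N + 1) → ℝ → ℝ) (Linv : Fin (N + 1) → ℝ → ℝ)
    (hLcont : ∀ i, ContinuousOn (L i) (Set.Icc a b))
    (hLmaps : ∀ i, Set.MapsTo (L i) (Set.Icc a b) (Set.Icc (x i.castSucc) (x i.succ)))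
    (hLa : ∀ i, L i a = x i.castSucc) (hLb : ∀ i, L i b = x i.succ)
    (hLinvcont : ∀ i, ContinuousOn (Linv i) (Set.Icc (x i.castSucc) (x i.succ)))
    (hLinvmaps : ∀ i, Set.MapsTo (Linv i) (Set.Icc (x i.castSucc) (x i.succ)) (Set.Icc a b))
    (hLinvL : ∀ i, ∀ t ∈ Set.Icc a b, Linv i (L i t) = t)
    (hLLinv : ∀ i, ∀ s ∈ Set.Icc (x i.castSucc) (x i.succ), L i (Linv i s) = s)
    (F : Fin (N + 1) → ℝ → ℝ → ℝ)
    (hFcont : ∀ i, ContinuousOn (fun p : ℝ × ℝ => F i p.1 p.2)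
      (Set.Icc a b ×ˢ (Set.univ : Set ℝ)))
    (α : Fin (N + 1) → ℝ) (κ : ℝ) (hκ : κ < 1) (hα : ∀ i, |α i| ≤ κ)
    (hFlip : ∀ i (u v w : ℝ), |F i u v - F i u w| ≤ |α i| * |v - w|)
    (hFa : ∀ i, F i a (y 0) = y i.castSucc)
    (hFb : ∀ i, F i b (y (Fin.last (N + 1))) = y i.succ) :
    ∃ φα : ℝ → ℝ,
      (ContinuousOn φα (Set.Icc a b) ∧ φα a = y 0 ∧ φα b = y (Fin.last (N + 1))) ∧
      (∀ i : Fin (N + 1), ∀ s ∈ Set.Icc (x i.castSucc) (x i.succ),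
        φα s = F i (Linv i s) (φα (Linv i s))) ∧
      (∀ j : Fin (N + 2), φα (x j) = y j) ∧
      (∀ ψ : ℝ → ℝ,
        (ContinuousOn ψ (Set.Icc a b) ∧ ψ a = y 0 ∧ ψ b = y (Fin.last (N + 1))) →
        (∀ i : Fin (N + 1), ∀ s ∈ Set.Icc (x i.castSucc) (x i.succ),
          ψ s = F i (Linv i s) (ψ (Linv i s))) →
        Set.EqOn ψ φα (Set.Icc a b)) := by
  classical
  have hab' : a ≤ b := hab.le
  have ha : a ∈ Set.Icc a b := Set.left_mem_Icc.mpr hab'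
  have hb : b ∈ Set.Icc a b := Set.right_mem_Icc.mpr hab'
  have hκ0 : (0 : ℝ) ≤ κ := le_trans (abs_nonneg _) (hα 0)
  have hxle : ∀ j k : Fin (N + 2), j.val ≤ k.val → x j ≤ x k := fun j k h =>
    hxmono.monotone h
  have hxeq : ∀ j k : Fin (N + 2), j.val = k.val → x j = x k := fun j k h => by
    congr 1; exact Fin.ext h
  have hsub : ∀ i : Fin (N + 1),
      Set.Icc (x i.castSucc) (x i.succ) ⊆ Set.Icc a b := by
    intro i
    apply Set.Icc_subset_Icc
    · rw [← hx0]; exact hxle _ _ (Nat.zero_le _)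
    · rw [← hxN]
      exact hxle _ _ (by simp only [Fin.val_succ, Fin.val_last]; omega)
  have hLinvb : ∀ i, Linv i (x i.succ) = b := fun i => by
    rw [← hLb i]; exact hLinvL i b hb
  have hLinva : ∀ i, Linv i (x i.castSucc) = a := fun i => by
    rw [← hLa i]; exact hLinvL i a ha
  -- the pieces cover [a,b]
  have hcover : ∀ s ∈ Set.Icc a b,
      ∃ i : Fin (N + 1), s ∈ Set.Icc (x i.castSucc) (x i.succ) := by
    intro s hs
    have key : ∀ n : ℕ, ∀ hn : n < N + 1, s ≤ x ⟨n + 1, by omega⟩ →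
        ∃ i : Fin (N + 1), s ∈ Set.Icc (x i.castSucc) (x i.succ) := by
      intro n
      induction n with
      | zero =>
        intro hn h1
        refine ⟨⟨0, hn⟩, ⟨?_, ?_⟩⟩
        · have h0 : x (Fin.castSucc ⟨0, hn⟩) = a := by
            rw [← hx0]; exact hxeq _ _ rfl
          rw [h0]; exact hs.1
        · calc s ≤ x ⟨1, by omega⟩ := h1
            _ = x (Fin.succ ⟨0, hn⟩) := hxeq _ _ rfl
      | succ n ih =>
        intro hn h1
        by_cases hc : s ≤ x ⟨n + 1, by omega⟩
        · exact ih (by omega) hc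
        · push_neg at hc
          refine ⟨⟨n + 1, hn⟩, ⟨?_, ?_⟩⟩
          · calc x (Fin.castSucc ⟨n + 1, hn⟩) = x ⟨n + 1, by omega⟩ :=
                hxeq _ _ rfl
              _ ≤ s := hc.le
          · calc s ≤ x ⟨n + 2, by omega⟩ := h1
              _ = x (Fin.succ ⟨n + 1, hn⟩) := hxeq _ _ rfl
    refine key N (by omega) ?_
    calc s ≤ b := hs.2
      _ = x (Fin.last (N + 1)) := hxN.symm
      _ = x ⟨N + 1, by omega⟩ := hxeq _ _ rfl
  -- a choice of index
  have hidx0 : ∀ s : ℝ, ∃ i : Fin (N + 1),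
      s ∈ Set.Icc a b → s ∈ Set.Icc (x i.castSucc) (x i.succ) := by
    intro s
    by_cases hs : s ∈ Set.Icc a b
    · obtain ⟨i, hi⟩ := hcover s hs; exact ⟨i, fun _ => hi⟩
    · exact ⟨0, fun h => absurd h hs⟩
  choose idx hidx using hidx0
  -- the RB operator on plain functions
  set T : (ℝ → ℝ) → ℝ → ℝ :=
    fun f s => F (idx s) (Linv (idx s) s) (f (Linv (idx s) s)) with hT
  -- well-definedness on overlaps
  have hwd : ∀ f : ℝ → ℝ, f a = y 0 → f b = y (Fin.last (N + 1)) →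
      ∀ i j : Fin (N + 1), ∀ s, s ∈ Set.Icc (x i.castSucc) (x i.succ) →
        s ∈ Set.Icc (x j.castSucc) (x j.succ) →
        F i (Linv i s) (f (Linv i s)) = F j (Linv j s) (f (Linv j s)) := by
    have aux : ∀ f : ℝ → ℝ, f a = y 0 → f b = y (Fin.last (N + 1)) →
        ∀ i j : Fin (N + 1), i.val < j.val → ∀ s,
        s ∈ Set.Icc (x i.castSucc) (x i.succ) →
        s ∈ Set.Icc (x j.castSucc) (x j.succ) →
        F i (Linv i s) (f (Linv i s)) = F j (Linv j s) (f (Linv j s)) := by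
      intro f hfa hfb i j hij s hsi hsj
      have h3 : x i.succ ≤ x j.castSucc :=
        hxle _ _ (by simp only [Fin.val_succ, Fin.coe_castSucc]; omega)
      have e1 : s = x i.succ := le_antisymm hsi.2 (h3.trans hsj.1)
      have e2 : s = x j.castSucc := le_antisymm (e1 ▸ h3) hsj.1
      have hij_eq : i.succ = j.castSucc := hxmono.injective (e1 ▸ e2)
      have l1 : Linv i s = b := by rw [e1]; exact hLinvb i
      have r1 : Linv j s = a := by rw [e2]; exact hLinva j
      calc F i (Linv i s) (f (Linv i s))
          = F i b (y (Fin.last (N + 1))) := by rw [l1, hfb]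
        _ = y i.succ := hFb i
        _ = y j.castSucc := by rw [hij_eq]
        _ = F j a (y 0) := (hFa j).symm
        _ = F j (Linv j s) (f (Linv j s)) := by rw [r1, hfa]
    intro f hfa hfb i j s hsi hsj
    rcases lt_trichotomy i.val j.val with h | h | h
    · exact aux f hfa hfb i j h s hsi hsj
    · have : i = j := Fin.ext h
      rw [this]
    · exact (aux f hfa hfb j i h s hsj hsi).symm
  have hwd' : ∀ f : ℝ → ℝ, f a = y 0 → f b = y (Fin.last (N + 1)) →
      ∀ i : Fin (N + 1), ∀ s ∈ Set.Icc (x i.castSucc) (x i.succ),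
        T f s = F i (Linv i s) (f (Linv i s)) := by
    intro f hfa hfb i s hs
    exact hwd f hfa hfb (idx s) i s (hidx s (hsub i hs)) hs
  -- endpoint values of T f
  have hTa : ∀ f : ℝ → ℝ, f a = y 0 → f b = y (Fin.last (N + 1)) →
      T f a = y 0 := by
    intro f hfa hfb
    have hca : x (Fin.castSucc (0 : Fin (N + 1))) = a := by
      rw [← hx0]; exact hxeq _ _ rfl
    have hmem : a ∈ Set.Icc (x (Fin.castSucc (0 : Fin (N + 1))))
        (x (Fin.succ (0 : Fin (N + 1)))) := by
      constructor
      · rw [hca]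
      · rw [← hca]; exact hxle _ _ (by simp)
    rw [hwd' f hfa hfb 0 a hmem]
    have hLa0 : Linv (0 : Fin (N + 1)) a = a := by
      conv_lhs => rw [← hca]
      exact hLinva 0
    rw [hLa0, hfa, hFa 0, Fin.castSucc_zero]
  have hTb : ∀ f : ℝ → ℝ, f a = y 0 → f b = y (Fin.last (N + 1)) →
      T f b = y (Fin.last (N + 1)) := by
    intro f hfa hfb
    have hcb : x (Fin.succ (Fin.last N)) = b := by
      rw [← hxN]; exact hxeq _ _ (by simp)
    have hmem : b ∈ Set.Icc (x (Fin.castSucc (Fin.last N)))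
        (x (Fin.succ (Fin.last N))) := by
      constructor
      · rw [← hcb]; exact hxle _ _ (by simp)
      · rw [hcb]
    rw [hwd' f hfa hfb (Fin.last N) b hmem]
    have hLbN : Linv (Fin.last N) b = b := by
      conv_lhs => rw [← hcb]
      exact hLinvb (Fin.last N)
    rw [hLbN, hfb, hFb (Fin.last N), Fin.succ_last]
  -- continuity of T f
  have hTcont : ∀ f : ℝ → ℝ, ContinuousOn f (Set.Icc a b) →
      f a = y 0 → f b = y (Fin.last (N + 1)) →
      ContinuousOn (T f) (Set.Icc a b) := by
    intro f hfc hfa hfb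
    have hIeq : Set.Icc a b
        = ⋃ i : Fin (N + 1), Set.Icc (x i.castSucc) (x i.succ) := by
      apply Set.Subset.antisymm
      · intro s hs
        obtain ⟨i, hi⟩ := hcover s hs
        exact Set.mem_iUnion.2 ⟨i, hi⟩
      · exact Set.iUnion_subset hsub
    rw [hIeq]
    apply (locallyFinite_of_finite _).continuousOn_iUnion (fun i => isClosed_Icc)
    intro i
    have hpair : ContinuousOn (fun s => (Linv i s, f (Linv i s)))
        (Set.Icc (x i.castSucc) (x i.succ)) :=
      (hLinvcont i).prodMk ((hfc.comp (hLinvcont i) (hLinvmaps i)))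
    have hcomp : ContinuousOn (fun s => F i (Linv i s) (f (Linv i s)))
        (Set.Icc (x i.castSucc) (x i.succ)) :=
      (hFcont i).comp hpair (fun s hs => ⟨hLinvmaps i hs, trivial⟩)
    exact hcomp.congr (fun s hs => hwd' f hfa hfb i s hs)
  -- the complete metric space X
  set XS : Set C(Set.Icc a b, ℝ) :=
    {f | f ⟨a, ha⟩ = y 0 ∧ f ⟨b, hb⟩ = y (Fin.last (N + 1))} with hXS
  have hXcl : IsClosed XS := by
    have h1 : IsClosed {f : C(Set.Icc a b, ℝ) | f ⟨a, ha⟩ = y 0} :=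
      isClosed_eq (continuous_eval_const (⟨a, ha⟩ : Set.Icc a b)) continuous_const
    have h2 : IsClosed {f : C(Set.Icc a b, ℝ) | f ⟨b, hb⟩ = y (Fin.last (N + 1))} :=
      isClosed_eq (continuous_eval_const (⟨b, hb⟩ : Set.Icc a b)) continuous_const
    exact h1.inter h2
  haveI : CompleteSpace XS := (hXcl.isComplete).completeSpace_coe
  haveI : Nonempty XS := by
    have hba : b - a ≠ 0 := sub_ne_zero.mpr hab.ne'
    refine ⟨⟨⟨fun p => y 0 + (p.1 - a) / (b - a) * (y (Fin.last (N + 1)) - y 0), ?_⟩,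
      ?_, ?_⟩⟩
    · fun_prop
    · show y 0 + (a - a) / (b - a) * _ = y 0
      simp
    · show y 0 + (b - a) / (b - a) * _ = y (Fin.last (N + 1))
      rw [div_self hba]; ring
  -- the RB operator on X
  have hcontT : ∀ f : XS,
      Continuous fun p : Set.Icc a b => T (Set.IccExtend hab' ⇑f.1) p.1 := by
    intro f
    have hea : Set.IccExtend hab' ⇑f.1 a = y 0 := by
      rw [Set.IccExtend_of_mem hab' _ ha]; exact f.2.1
    have heb : Set.IccExtend hab' ⇑f.1 b = y (Fin.last (N + 1)) := by
      rw [Set.IccExtend_of_mem hab' _ hb]; exact f.2.2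
    have h1 : ContinuousOn (T (Set.IccExtend hab' ⇑f.1)) (Set.Icc a b) :=
      hTcont _ (f.1.continuous.Icc_extend').continuousOn hea heb
    exact continuousOn_iff_continuous_restrict.mp h1
  have hmemT : ∀ f : XS,
      T (Set.IccExtend hab' ⇑f.1) a = y 0 ∧
      T (Set.IccExtend hab' ⇑f.1) b = y (Fin.last (N + 1)) := by
    intro f
    have hea : Set.IccExtend hab' ⇑f.1 a = y 0 := by
      rw [Set.IccExtend_of_mem hab' _ ha]; exact f.2.1
    have heb : Set.IccExtend hab' ⇑f.1 b = y (Fin.last (N + 1)) := by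
      rw [Set.IccExtend_of_mem hab' _ hb]; exact f.2.2
    exact ⟨hTa _ hea heb, hTb _ hea heb⟩
  set Φ : XS → XS := fun f =>
    ⟨⟨fun p => T (Set.IccExtend hab' ⇑f.1) p.1, hcontT f⟩,
      (hmemT f).1, (hmemT f).2⟩ with hΦ
  -- Φ is a contraction
  set K : NNReal := ⟨κ, hκ0⟩ with hK
  have hΦcontr : ContractingWith K Φ := by
    constructor
    · exact_mod_cast hκ
    · apply LipschitzWith.of_dist_le_mul
      intro f g
      have hKc : (K : ℝ) = κ := rfl
      rw [hKc, Subtype.dist_eq, Subtype.dist_eq f g]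
      refine (ContinuousMap.dist_le (mul_nonneg hκ0 dist_nonneg)).mpr ?_
      intro p
      have hp : (p : ℝ) ∈ Set.Icc (x (idx p.1).castSucc) (x (idx p.1).succ) :=
        hidx p.1 p.2
      have hu : Linv (idx p.1) p.1 ∈ Set.Icc a b := hLinvmaps _ hp
      show dist (T (Set.IccExtend hab' ⇑f.1) p.1) (T (Set.IccExtend hab' ⇑g.1) p.1)
        ≤ κ * dist f.1 g.1
      rw [hT]
      simp only []
      rw [Set.IccExtend_of_mem hab' _ hu, Set.IccExtend_of_mem hab' _ hu,
        Real.dist_eq]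
      calc |F (idx p.1) (Linv (idx p.1) p.1) (f.1 ⟨Linv (idx p.1) p.1, hu⟩)
            - F (idx p.1) (Linv (idx p.1) p.1) (g.1 ⟨Linv (idx p.1) p.1, hu⟩)|
          ≤ |α (idx p.1)| * |f.1 ⟨Linv (idx p.1) p.1, hu⟩
              - g.1 ⟨Linv (idx p.1) p.1, hu⟩| := hFlip _ _ _ _
        _ ≤ κ * |f.1 ⟨Linv (idx p.1) p.1, hu⟩ - g.1 ⟨Linv (idx p.1) p.1, hu⟩| :=
            mul_le_mul_of_nonneg_right (hα _) (abs_nonneg _)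
        _ ≤ κ * dist f.1 g.1 := by
            refine mul_le_mul_of_nonneg_left ?_ hκ0
            rw [← Real.dist_eq]
            exact ContinuousMap.dist_apply_le_dist _
  -- the fixed point
  set φ : XS := ContractingWith.fixedPoint Φ hΦcontr with hφdef
  have hfix : Φ φ = φ := hΦcontr.fixedPoint_isFixedPt
  set φα : ℝ → ℝ := Set.IccExtend hab' ⇑φ.1 with hφα
  have hφI : ∀ s, ∀ hs : s ∈ Set.Icc a b, φα s = φ.1 ⟨s, hs⟩ := fun s hs =>
    Set.IccExtend_of_mem hab' _ hs
  have hfa' : φα a = y 0 := by rw [hφI a ha]; exact φ.2.1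
  have hfb' : φα b = y (Fin.last (N + 1)) := by rw [hφI b hb]; exact φ.2.2
  have hfixpt : ∀ s, ∀ hs : s ∈ Set.Icc a b, φα s = T φα s := by
    intro s hs
    rw [hφI s hs]
    conv_lhs => rw [← hfix]
    rfl
  have hself : ∀ i : Fin (N + 1), ∀ s ∈ Set.Icc (x i.castSucc) (x i.succ),
      φα s = F i (Linv i s) (φα (Linv i s)) := by
    intro i s hs
    rw [hfixpt s (hsub i hs)]
    exact hwd' φα hfa' hfb' i s hs
  have hinterp : ∀ j : Fin (N + 2), φα (x j) = y j := by
    intro j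
    induction j using Fin.cases with
    | zero => rw [hx0]; exact hfa'
    | succ i =>
      have hmem : x i.succ ∈ Set.Icc (x i.castSucc) (x i.succ) :=
        ⟨hxle _ _ (by simp only [Fin.val_succ, Fin.coe_castSucc]; omega), le_rfl⟩
      rw [hself i _ hmem, hLinvb i, hfb', hFb i]
  refine ⟨φα, ⟨(φ.1.continuous.Icc_extend').continuousOn, hfa', hfb'⟩,
    hself, hinterp, ?_⟩
  -- uniqueness
  intro ψ hψ hψself s hs
  obtain ⟨hψc, hψa, hψb⟩ := hψ
  set ψ' : XS := ⟨⟨(Set.Icc a b).restrict ψ,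
      continuousOn_iff_continuous_restrict.mp hψc⟩, hψa, hψb⟩ with hψ'
  have hψeI : ∀ t, ∀ ht : t ∈ Set.Icc a b,
      Set.IccExtend hab' ⇑ψ'.1 t = ψ t := fun t ht =>
    Set.IccExtend_of_mem hab' _ ht
  have hψfix : Function.IsFixedPt Φ ψ' := by
    apply Subtype.ext
    apply ContinuousMap.ext
    intro p
    show T (Set.IccExtend hab' ⇑ψ'.1) p.1 = ψ p.1
    have hp : (p : ℝ) ∈ Set.Icc (x (idx p.1).castSucc) (x (idx p.1).succ) :=
      hidx p.1 p.2
    have hu : Linv (idx p.1) p.1 ∈ Set.Icc a b := hLinvmaps _ hp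
    rw [hT]
    simp only []
    rw [hψeI _ hu]
    exact (hψself (idx p.1) p.1 hp).symm
  have hψφ : ψ' = φ := hΦcontr.fixedPoint_unique hψfix
  calc ψ s = ψ'.1 ⟨s, hs⟩ := rfl
    _ = φ.1 ⟨s, hs⟩ := by rw [hψφ]
    _ = φα s := (hφI s hs).symm
end

section
/- With the neural network operator S_{n,σ} as above and f : [a,b] → ℝ continuous, the approximation error satisfies ‖f - S_{n,σ}(f, ·)‖∞ ≤ ω(f, h), where h = (b-a)/n and ω(f, δ) = sup{|f(x) - f(y)| : x, y ∈ [a,b], |x - y| ≤ δ} is the modulus of continuity of f. -/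
/-- Modulus of continuity of `f` on `[a,b]` with parameter `δ`. -/
noncomputable def modulus (f : ℝ → ℝ) (a b δ : ℝ) : ℝ :=
  sSup {d : ℝ | ∃ u ∈ Set.Icc a b, ∃ v ∈ Set.Icc a b, |u - v| ≤ δ ∧ d = |f u - f v|}

lemma abs_le_modulus (f : ℝ → ℝ) (a b δ : ℝ) (hf : ContinuousOn f (Set.Icc a b))
    (u v : ℝ) (hu : u ∈ Set.Icc a b) (hv : v ∈ Set.Icc a b)
    (huv : |u - v| ≤ δ) : |f u - f v| ≤ modulus f a b δ := by
  obtain ⟨C, hC⟩ := (isCompact_Icc (a := a) (b := b)).exists_bound_of_continuousOn hf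
  apply le_csSup
  · refine ⟨2 * C, ?_⟩
    rintro d ⟨p, hp, q, hq, _, rfl⟩
    have h1 : |f p| ≤ C := by simpa using hC p hp
    have h2 : |f q| ≤ C := by simpa using hC q hq
    have : |f p - f q| ≤ |f p| + |f q| := by
      rw [sub_eq_add_neg]
      exact (abs_add_le _ _).trans (by rw [abs_neg])
    linarith
  · exact ⟨u, hu, v, hv, huv, rfl⟩

/-- Approximation error of the neural network operator:
`‖f - S_{n,σ}(f,·)‖∞ ≤ ω(f, (b-a)/n)`. -/
theorem stmt_9 (m : ℝ) (hm : 0 < m) (σ : ℝ → ℝ) (hσ : Monotone σ)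
    (hσ1 : ∀ x : ℝ, m ≤ x → σ x = 1) (hσ0 : ∀ x : ℝ, x ≤ -m → σ x = 0)
    (ξ : ℝ → ℝ) (hξ : ∀ x : ℝ, ξ x = σ (x + m) - σ (x - m))
    (a b : ℝ) (hab : a < b) (n : ℕ) (hn : 0 < n)
    (f : ℝ → ℝ) (hf : ContinuousOn f (Set.Icc a b)) :
    ∀ x ∈ Set.Icc a b,
      |f x - ∑ k ∈ Finset.range (n + 1),
          f (a + k * ((b - a) / n)) * ξ (2 * m / ((b - a) / n) * (x - (a + k * ((b - a) / n))))|
        ≤ modulus f a b ((b - a) / n) := by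
  intro x hx
  have hn' : (0:ℝ) < n := Nat.cast_pos.mpr hn
  set h : ℝ := (b - a) / n with hh
  have hh0 : 0 < h := div_pos (by linarith) hn'
  have hnh : (n : ℝ) * h = b - a := by
    rw [hh]; field_simp [hn'.ne']
  have hc0 : 0 < 2 * m / h := div_pos (by linarith) hh0
  have hch : 2 * m / h * h = 2 * m := by field_simp
  -- ξ properties
  have hξ0 : ∀ t, 0 ≤ ξ t := by
    intro t
    rw [hξ]
    have := hσ (show t - m ≤ t + m by linarith)
    linarith
  have hξhi : ∀ t, 2 * m ≤ t → ξ t = 0 := by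
    intro t ht
    rw [hξ, hσ1 _ (by linarith), hσ1 _ (by linarith)]; ring
  have hξlo : ∀ t, t ≤ -(2 * m) → ξ t = 0 := by
    intro t ht
    rw [hξ, hσ0 _ (by linarith), hσ0 _ (by linarith)]; ring
  -- choose k
  have hxa := hx.1
  have hxb := hx.2
  have hxa0 : 0 ≤ (x - a) / h := div_nonneg (by linarith) hh0.le
  set k : ℕ := min ⌊(x - a) / h⌋₊ (n - 1) with hk
  have hkn : k ≤ n - 1 := min_le_right _ _
  have hkn' : k + 1 ≤ n := by omega
  have hkfl : (k : ℝ) ≤ (x - a) / h := by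
    have : (k : ℝ) ≤ (⌊(x - a) / h⌋₊ : ℝ) := by
      exact_mod_cast min_le_left _ _
    exact this.trans (Nat.floor_le hxa0)
  have hlow : a + k * h ≤ x := by
    have h1 : (k : ℝ) * h ≤ x - a := by
      have := mul_le_mul_of_nonneg_right hkfl hh0.le
      rwa [div_mul_cancel₀ _ hh0.ne'] at this
    linarith
  have hhigh : x ≤ a + (k + 1 : ℝ) * h := by
    rcases le_or_gt ⌊(x - a) / h⌋₊ (n - 1) with hc | hc
    · have hk' : k = ⌊(x - a) / h⌋₊ := by omega
      have : (x - a) / h < (k : ℝ) + 1 := by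
        rw [hk']; exact Nat.lt_floor_add_one _
      have h2 : x - a < ((k : ℝ) + 1) * h := by
        have := (div_lt_iff₀ hh0).mp this
        linarith
      linarith
    · have hk' : k = n - 1 := by omega
      have : ((k : ℝ) + 1) = n := by
        rw [hk']; push_cast [Nat.cast_sub hn]; ring
      rw [this]
      linarith [hnh]
  -- endpoints in [a,b]
  have hAk : ∀ j : ℕ, j ≤ n → a + j * h ∈ Set.Icc a b := by
    intro j hj
    constructor
    · nlinarith [Nat.cast_nonneg (α := ℝ) j]
    · have : (j : ℝ) ≤ n := by exact_mod_cast hj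
      nlinarith
  -- reduce sum to two terms
  have hsum : ∑ j ∈ Finset.range (n + 1),
      f (a + j * h) * ξ (2 * m / h * (x - (a + j * h)))
      = f (a + k * h) * ξ (2 * m / h * (x - (a + k * h)))
        + f (a + (k+1:ℕ) * h) * ξ (2 * m / h * (x - (a + (k+1:ℕ) * h))) := by
    have hpair : ({k, k+1} : Finset ℕ) ⊆ Finset.range (n + 1) := by
      intro j hj
      simp only [Finset.mem_insert, Finset.mem_singleton] at hj
      rcases hj with rfl | rfl <;> simp [Finset.mem_range] <;> omega
    rw [← Finset.sum_subset hpair]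
    · rw [Finset.sum_pair (by omega : k ≠ k + 1)]
    · intro j hj hj'
      simp only [Finset.mem_insert, Finset.mem_singleton, not_or] at hj'
      obtain ⟨hj1, hj2⟩ := hj'
      rcases lt_or_gt_of_ne hj1 with hlt | hgt
      · -- j < k : argument ≥ 2m
        have hjk : (j : ℝ) + 1 ≤ k := by exact_mod_cast hlt
        have harg : 2 * m ≤ 2 * m / h * (x - (a + j * h)) := by
          have hd : h ≤ x - (a + j * h) := by nlinarith
          calc 2 * m = 2 * m / h * h := hch.symm
            _ ≤ 2 * m / h * (x - (a + j * h)) := by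
                exact mul_le_mul_of_nonneg_left hd hc0.le
        rw [hξhi _ harg, mul_zero]
      · -- j > k+1 : argument ≤ -2m
        have hjk : (k : ℝ) + 1 + 1 ≤ j := by
          exact_mod_cast (by omega : k + 1 + 1 ≤ j)
        have harg : 2 * m / h * (x - (a + j * h)) ≤ -(2 * m) := by
          have hd : x - (a + j * h) ≤ -h := by nlinarith
          calc 2 * m / h * (x - (a + j * h)) ≤ 2 * m / h * (-h) := by
                exact mul_le_mul_of_nonneg_left hd hc0.le
            _ = -(2 * m) := by field_simp
        rw [hξlo _ harg, mul_zero]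
  -- partition of unity
  set t := 2 * m / h * (x - (a + k * h)) with ht
  have hs : 2 * m / h * (x - (a + (k+1:ℕ) * h)) = t - 2 * m := by
    rw [ht]
    push_cast
    have e : x - (a + ((k:ℝ)+1)*h) = (x - (a + (k:ℝ)*h)) - h := by ring
    rw [e, mul_sub, hch]
  have ht0 : 0 ≤ t := mul_nonneg hc0.le (by linarith)
  have ht2 : t ≤ 2 * m := by
    have hd : x - (a + k * h) ≤ h := by push_cast at hhigh; linarith
    calc t ≤ 2 * m / h * h := mul_le_mul_of_nonneg_left hd hc0.le
      _ = 2 * m := hch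
  have hone : ξ t + ξ (t - 2 * m) = 1 := by
    rw [hξ, hξ]
    have e1 : σ (t + m) = 1 := hσ1 _ (by linarith)
    have e2 : σ (t - 2 * m - m) = 0 := hσ0 _ (by linarith)
    have e3 : t - 2 * m + m = t - m := by ring
    rw [e1, e3, e2]
    ring
  -- final estimate
  have hb1 : |f x - f (a + k * h)| ≤ modulus f a b h := by
    apply abs_le_modulus f a b h hf x _ hx (hAk k (by omega))
    rw [abs_le]
    constructor
    · linarith
    · linarith
  have hb2 : |f x - f (a + (k+1:ℕ) * h)| ≤ modulus f a b h := by
    apply abs_le_modulus f a b h hf x _ hx (hAk (k+1) hkn')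
    rw [abs_le]
    push_cast
    constructor
    · linarith
    · linarith
  have hmod0 : 0 ≤ modulus f a b h := by
    exact le_trans (abs_nonneg _) hb1
  calc |f x - ∑ j ∈ Finset.range (n + 1),
          f (a + j * h) * ξ (2 * m / h * (x - (a + j * h)))|
      = |ξ t * (f x - f (a + k * h)) + ξ (t - 2*m) * (f x - f (a + (k+1:ℕ) * h))| := by
        rw [hsum, hs]
        congr 1
        linear_combination (-(f x)) * hone
    _ ≤ ξ t * |f x - f (a + k * h)| + ξ (t - 2*m) * |f x - f (a + (k+1:ℕ) * h)| := by
        refine (abs_add_le _ _).trans ?_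
        rw [abs_mul, abs_mul, abs_of_nonneg (hξ0 t), abs_of_nonneg (hξ0 _)]
    _ ≤ ξ t * modulus f a b h + ξ (t - 2*m) * modulus f a b h := by
        exact add_le_add (mul_le_mul_of_nonneg_left hb1 (hξ0 t))
          (mul_le_mul_of_nonneg_left hb2 (hξ0 _))
    _ = modulus f a b h := by rw [← add_mul, hone, one_mul]
end

section
/- Let f ∈ C[a,b] and for each n let f_n^α be the neural network α-fractal function satisfying f_n^α(x) = α_i f_n^α(L_i⁻¹(x)) + f(x) - α_i S_{n,σ}(f, L_i⁻¹(x)) on [x_{i-1}, x_i], with |α|∞ < 1. Then ‖f_n^α - f‖∞ ≤ (|α|∞/(1-|α|∞)) ω(f, (b-a)/n); in particular, f_n^α → f uniformly as n → ∞. -/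
open Filter

/-- The neural network operator `S_{n,σ}(f,·)` with nodes `a_k = a + k (b-a)/n`. -/
noncomputable def nnOp (m : ℝ) (ξ : ℝ → ℝ) (f : ℝ → ℝ) (a b : ℝ) (n : ℕ) (t : ℝ) : ℝ :=
  ∑ k ∈ Finset.range (n + 1),
    f (a + k * ((b - a) / n)) * ξ (2 * m / ((b - a) / n) * (t - (a + k * ((b - a) / n))))

lemma modulus_mem_le {f : ℝ → ℝ} {a b δ : ℝ}
    (hf : ContinuousOn f (Set.Icc a b)) {u v : ℝ} (hu : u ∈ Set.Icc a b)
    (hv : v ∈ Set.Icc a b) (huv : |u - v| ≤ δ) :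
    |f u - f v| ≤ modulus f a b δ := by
  obtain ⟨C, hC⟩ := isCompact_Icc.exists_bound_of_continuousOn hf
  apply le_csSup
  · refine ⟨C + C, ?_⟩
    rintro d ⟨u', hu', v', hv', -, rfl⟩
    calc |f u' - f v'| ≤ |f u'| + |f v'| := abs_sub _ _
      _ ≤ C + C := add_le_add (hC u' hu') (hC v' hv')
  · exact ⟨u, hu, v, hv, huv, rfl⟩

lemma modulus_nonneg {f : ℝ → ℝ} {a b : ℝ} (hab : a ≤ b)
    (hf : ContinuousOn f (Set.Icc a b)) {δ : ℝ} (hδ : 0 ≤ δ) :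
    0 ≤ modulus f a b δ := by
  have := modulus_mem_le hf (Set.left_mem_Icc.2 hab) (Set.left_mem_Icc.2 hab)
    (by simpa using hδ)
  simpa using this

lemma modulus_small {f : ℝ → ℝ} {a b : ℝ}
    (hf : ContinuousOn f (Set.Icc a b)) {ε : ℝ} (hε : 0 < ε) :
    ∃ δ0 > 0, ∀ δ : ℝ, δ ≤ δ0 → modulus f a b δ ≤ ε := by
  have huc : UniformContinuousOn f (Set.Icc a b) :=
    isCompact_Icc.uniformContinuousOn_of_continuous hf
  rw [Metric.uniformContinuousOn_iff] at huc
  obtain ⟨δ1, hδ1, hd⟩ := huc ε hε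
  refine ⟨δ1 / 2, by linarith, fun δ hδ => ?_⟩
  apply Real.sSup_le _ hε.le
  rintro d ⟨u, hu, v, hv, huv, rfl⟩
  have : dist u v < δ1 := by
    rw [Real.dist_eq]; linarith
  have := hd u hu v hv this
  rw [Real.dist_eq] at this
  exact this.le

lemma nnOp_err (m : ℝ) (hm : 0 < m) (σ : ℝ → ℝ) (hσ : Monotone σ)
    (hσ1 : ∀ x : ℝ, m ≤ x → σ x = 1) (hσ0 : ∀ x : ℝ, x ≤ -m → σ x = 0)
    (ξ : ℝ → ℝ) (hξ : ∀ x : ℝ, ξ x = σ (x + m) - σ (x - m))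
    {a b : ℝ} (hab : a < b) (f : ℝ → ℝ) (hf : ContinuousOn f (Set.Icc a b))
    {n : ℕ} (hn : 0 < n) {t : ℝ} (ht : t ∈ Set.Icc a b) :
    |nnOp m ξ f a b n t - f t| ≤ modulus f a b ((b - a) / n) := by
  have hn' : (0:ℝ) < n := Nat.cast_pos.2 hn
  rw [nnOp]
  set h : ℝ := (b - a) / n with hh
  have hh0 : 0 < h := div_pos (by linarith) hn'
  have hhne : h ≠ 0 := hh0.ne'
  have h2m : 0 < 2 * m / h := by positivity
  have h2mh : 2 * m / h * h = 2 * m := by field_simp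
  have hnb : a + n * h = b := by
    rw [hh]; field_simp; ring
  set g : ℕ → ℝ := fun k => σ (2 * m / h * (t - (a + k * h)) + m) with hg
  have hterm : ∀ k : ℕ, ξ (2 * m / h * (t - (a + k * h))) = g k - g (k + 1) := by
    intro k
    rw [hξ, hg]
    have : 2 * m / h * (t - (a + (k:ℝ) * h)) - m
        = 2 * m / h * (t - (a + ((k:ℕ) + 1 : ℕ) * h)) + m := by
      push_cast
      field_simp
      ring
    rw [this]
  have hξ0 : ∀ k : ℕ, 0 ≤ ξ (2 * m / h * (t - (a + k * h))) := by
    intro k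
    rw [hξ]
    exact sub_nonneg.2 (hσ (by linarith))
  have hsum : ∑ k ∈ Finset.range (n + 1), ξ (2 * m / h * (t - (a + k * h))) = 1 := by
    rw [Finset.sum_congr rfl fun k _ => hterm k, Finset.sum_range_sub' g (n + 1)]
    have hg0 : g 0 = 1 := by
      rw [hg]
      apply hσ1
      have : 0 ≤ 2 * m / h * (t - (a + (0:ℕ) * h)) := by
        apply mul_nonneg h2m.le
        push_cast
        have := ht.1
        linarith
      linarith
    have hgn : g (n + 1) = 0 := by
      rw [hg]
      apply hσ0
      have h1 : t - (a + ((n:ℕ) + 1 : ℕ) * h) ≤ -h := by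
        push_cast
        have := ht.2
        linarith [hnb]
      have h2 : 2 * m / h * (t - (a + ((n:ℕ) + 1 : ℕ) * h)) ≤ 2 * m / h * (-h) :=
        mul_le_mul_of_nonneg_left h1 h2m.le
      have h3 : 2 * m / h * (-h) = -(2 * m) := by field_simp
      linarith
    rw [hg0, hgn]; ring
  have hrepr : (∑ k ∈ Finset.range (n + 1),
        f (a + k * h) * ξ (2 * m / h * (t - (a + k * h)))) - f t
      = ∑ k ∈ Finset.range (n + 1),
        (f (a + k * h) - f t) * ξ (2 * m / h * (t - (a + k * h))) := by
    simp only [sub_mul]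
    rw [Finset.sum_sub_distrib, ← Finset.mul_sum, hsum, mul_one]
  rw [hrepr]
  calc |∑ k ∈ Finset.range (n + 1),
        (f (a + k * h) - f t) * ξ (2 * m / h * (t - (a + k * h)))|
      ≤ ∑ k ∈ Finset.range (n + 1),
        |(f (a + k * h) - f t) * ξ (2 * m / h * (t - (a + k * h)))| :=
        Finset.abs_sum_le_sum_abs _ _
    _ ≤ ∑ k ∈ Finset.range (n + 1),
        modulus f a b h * ξ (2 * m / h * (t - (a + k * h))) := by
        apply Finset.sum_le_sum
        intro k hk
        rw [abs_mul, abs_of_nonneg (hξ0 k)]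
        by_cases hcase : |t - (a + k * h)| ≤ h
        · apply mul_le_mul_of_nonneg_right _ (hξ0 k)
          have hkn : (k : ℝ) ≤ n := by
            exact_mod_cast Nat.lt_succ_iff.mp (Finset.mem_range.mp hk)
          have hak : a + (k:ℝ) * h ∈ Set.Icc a b := by
            constructor
            · nlinarith [mul_nonneg (Nat.cast_nonneg k : (0:ℝ) ≤ k) hh0.le]
            · nlinarith
          exact modulus_mem_le hf hak ht (by rwa [abs_sub_comm])
        · push_neg at hcase
          have hz : ξ (2 * m / h * (t - (a + k * h))) = 0 := by
            rcases lt_abs.mp hcase with hpos | hneg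
            · have hX : 2 * m ≤ 2 * m / h * (t - (a + k * h)) := by
                have := mul_le_mul_of_nonneg_left hpos.le h2m.le
                linarith [h2mh]
              rw [hξ, hσ1 _ (by linarith), hσ1 _ (by linarith), sub_self]
            · have hX : 2 * m / h * (t - (a + k * h)) ≤ -(2 * m) := by
                have hle : t - (a + k * h) ≤ -h := by linarith
                have := mul_le_mul_of_nonneg_left hle h2m.le
                have h3 : 2 * m / h * (-h) = -(2 * m) := by field_simp
                linarith
              rw [hξ, hσ0 _ (by linarith), hσ0 _ (by linarith), sub_self]
          rw [hz, mul_zero, mul_zero]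
    _ = modulus f a b h * ∑ k ∈ Finset.range (n + 1),
          ξ (2 * m / h * (t - (a + k * h))) := by rw [Finset.mul_sum]
    _ = modulus f a b h := by rw [hsum, mul_one]

lemma exists_subinterval {N : ℕ} {x : Fin (N + 2) → ℝ} (hxmono : StrictMono x)
    {a b s : ℝ} (hx0 : x 0 = a) (hxN : x (Fin.last (N + 1)) = b)
    (hs : s ∈ Set.Icc a b) :
    ∃ i : Fin (N + 1), s ∈ Set.Icc (x i.castSucc) (x i.succ) := by
  classical
  set T := Finset.univ.filter (fun k : Fin (N + 2) => x k ≤ s) with hT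
  have h0 : (0 : Fin (N + 2)) ∈ T := by simp [hT, hx0, hs.1]
  have hTne : T.Nonempty := ⟨0, h0⟩
  set j := T.max' hTne with hj
  have hxj : x j ≤ s := by
    have hmem := T.max'_mem hTne
    simp only [hT, Finset.mem_filter] at hmem
    exact hmem.2
  by_cases hlt : (j : ℕ) < N + 1
  · refine ⟨⟨(j : ℕ), hlt⟩, ?_, ?_⟩
    · have he : (⟨(j : ℕ), hlt⟩ : Fin (N + 1)).castSucc = j := by
        ext; simp
      rw [he]; exact hxj
    · by_contra hcon
      push_neg at hcon
      have hmem : ((⟨(j : ℕ), hlt⟩ : Fin (N + 1)).succ : Fin (N + 2)) ∈ T := by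
        simp only [hT, Finset.mem_filter, Finset.mem_univ, true_and]
        exact hcon.le
      have hle := T.le_max' _ hmem
      rw [← hj] at hle
      have : (j : ℕ) + 1 ≤ (j : ℕ) := by
        have := (Fin.le_def).mp hle
        simpa using this
      omega
  · have hjl : j = Fin.last (N + 1) := by
      have := j.isLt
      ext
      simp only [Fin.val_last]
      omega
    have hsb : s = b := le_antisymm hs.2 (by rw [← hxN, ← hjl]; exact hxj)
    refine ⟨Fin.last N, ?_, ?_⟩
    · rw [hsb, ← hxN]
      exact hxmono.monotone (Fin.le_last _)
    · have he : (Fin.last N).succ = Fin.last (N + 1) := rfl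
      rw [he, hxN]; exact hs.2

/-- Error bound and uniform convergence of the neural network α-fractal functions:
`‖f_n^α - f‖∞ ≤ (|α|∞/(1-|α|∞)) ω(f,(b-a)/n)` and `f_n^α → f` uniformly. -/
theorem stmt_10 (m : ℝ) (hm : 0 < m) (σ : ℝ → ℝ) (hσ : Monotone σ)
    (hσ1 : ∀ x : ℝ, m ≤ x → σ x = 1) (hσ0 : ∀ x : ℝ, x ≤ -m → σ x = 0)
    (ξ : ℝ → ℝ) (hξ : ∀ x : ℝ, ξ x = σ (x + m) - σ (x - m))
    (a b : ℝ) (hab : a < b) (N : ℕ)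
    (x : Fin (N + 2) → ℝ) (hxmono : StrictMono x)
    (hx0 : x 0 = a) (hxN : x (Fin.last (N + 1)) = b)
    (f : ℝ → ℝ) (hf : ContinuousOn f (Set.Icc a b))
    (L : Fin (N + 1) → ℝ → ℝ) (Linv : Fin (N + 1) → ℝ → ℝ)
    (hL : ∀ i t, L i t = ((x i.succ - x i.castSucc) / (b - a)) * t +
      (b * x i.castSucc - a * x i.succ) / (b - a))
    (hLinv : ∀ i, ∀ s ∈ Set.Icc (x i.castSucc) (x i.succ),
      L i (Linv i s) = s ∧ Linv i s ∈ Set.Icc a b)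
    (α : Fin (N + 1) → ℝ) (hκ : (⨆ i : Fin (N + 1), |α i|) < 1)
    (fα : ℕ → ℝ → ℝ) (hfαc : ∀ n, ContinuousOn (fα n) (Set.Icc a b))
    (hself : ∀ n : ℕ, 0 < n → ∀ i : Fin (N + 1), ∀ s ∈ Set.Icc (x i.castSucc) (x i.succ),
      fα n s = α i * fα n (Linv i s) + f s - α i * nnOp m ξ f a b n (Linv i s)) :
    (∀ n : ℕ, 0 < n → ∀ s ∈ Set.Icc a b,
      |fα n s - f s| ≤ (⨆ i : Fin (N + 1), |α i|) / (1 - ⨆ i : Fin (N + 1), |α i|) *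
        modulus f a b ((b - a) / n)) ∧
    TendstoUniformlyOn fα f atTop (Set.Icc a b) := by
  have hab' : a ≤ b := hab.le
  set κ := ⨆ i : Fin (N + 1), |α i| with hκdef
  have hbdd : BddAbove (Set.range fun i : Fin (N + 1) => |α i|) :=
    (Set.finite_range _).bddAbove
  have hκle : ∀ i, |α i| ≤ κ := fun i => le_ciSup hbdd i
  have hκ0 : 0 ≤ κ := le_trans (abs_nonneg (α 0)) (hκle 0)
  have h1κ : 0 < 1 - κ := by linarith
  have main : ∀ n : ℕ, 0 < n → ∀ s ∈ Set.Icc a b,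
      |fα n s - f s| ≤ κ / (1 - κ) * modulus f a b ((b - a) / n) := by
    intro n hn
    set ω := modulus f a b ((b - a) / n) with hω
    have hω0 : 0 ≤ ω := modulus_nonneg hab' hf (div_nonneg (by linarith) (Nat.cast_nonneg n))
    set M := sSup ((fun s => |fα n s - f s|) '' Set.Icc a b) with hM
    have hcont : ContinuousOn (fun s => |fα n s - f s|) (Set.Icc a b) :=
      ((hfαc n).sub hf).abs
    have hbddM : BddAbove ((fun s => |fα n s - f s|) '' Set.Icc a b) :=
      (isCompact_Icc.image_of_continuousOn hcont).bddAbove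
    have hleM : ∀ s ∈ Set.Icc a b, |fα n s - f s| ≤ M := fun s hs =>
      le_csSup hbddM ⟨s, hs, rfl⟩
    have hM0 : 0 ≤ M := le_trans (abs_nonneg _) (hleM a (Set.left_mem_Icc.2 hab'))
    have hMle : M ≤ κ * (M + ω) := by
      apply csSup_le ((Set.nonempty_Icc.2 hab').image _)
      rintro d ⟨s, hs, rfl⟩
      obtain ⟨i, hsi⟩ := exists_subinterval hxmono hx0 hxN hs
      have hu := hLinv i s hsi
      set u := Linv i s with hudef
      have key : fα n s - f s
          = α i * ((fα n u - f u) + (f u - nnOp m ξ f a b n u)) := by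
        rw [hself n hn i s hsi]; ring
      show |fα n s - f s| ≤ κ * (M + ω)
      rw [key, abs_mul]
      have h1 : |fα n u - f u| ≤ M := hleM u hu.2
      have h2 : |f u - nnOp m ξ f a b n u| ≤ ω := by
        rw [abs_sub_comm]
        exact nnOp_err m hm σ hσ hσ1 hσ0 ξ hξ hab f hf hn hu.2
      apply mul_le_mul (hκle i) _ (abs_nonneg _) hκ0
      exact le_trans (abs_add_le _ _) (add_le_add h1 h2)
    have hMfin : M ≤ κ / (1 - κ) * ω := by
      rw [div_mul_eq_mul_div, le_div_iff₀ h1κ]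
      nlinarith
    intro s hs
    exact le_trans (hleM s hs) hMfin
  refine ⟨main, ?_⟩
  rw [Metric.tendstoUniformlyOn_iff]
  intro ε hε
  set C := κ / (1 - κ) with hC
  have hC0 : 0 ≤ C := div_nonneg hκ0 h1κ.le
  obtain ⟨δ0, hδ0, hmod⟩ := modulus_small hf (show (0:ℝ) < ε / (2 * (C + 1)) by positivity)
  obtain ⟨n0, hn0⟩ := exists_nat_ge ((b - a) / δ0)
  filter_upwards [eventually_ge_atTop (max 1 n0)] with n hn
  intro s hs
  have hn1 : 0 < n := lt_of_lt_of_le Nat.one_pos (le_trans (le_max_left _ _) hn)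
  have hnn0 : (n0 : ℝ) ≤ n := by
    exact_mod_cast le_trans (le_max_right 1 n0) hn
  have hδ : (b - a) / n ≤ δ0 := by
    rw [div_le_iff₀ (by exact_mod_cast hn1)]
    have h1 : b - a ≤ n0 * δ0 := by
      rw [div_le_iff₀ hδ0] at hn0; linarith
    nlinarith
  have hb := main n hn1 s hs
  have hmle := hmod _ hδ
  have hfinal : |fα n s - f s| ≤ C * (ε / (2 * (C + 1))) := by
    calc |fα n s - f s| ≤ C * modulus f a b ((b - a) / n) := hb
      _ ≤ C * (ε / (2 * (C + 1))) := by
          apply mul_le_mul_of_nonneg_left hmle hC0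
  have hstep : C * (ε / (2 * (C + 1))) ≤ ε / 2 := by
    have h1 : C * (ε / (2 * (C + 1))) ≤ (C + 1) * (ε / (2 * (C + 1))) := by
      apply mul_le_mul_of_nonneg_right (by linarith) (by positivity)
    have h2 : (C + 1) * (ε / (2 * (C + 1))) = ε / 2 := by
      field_simp
    linarith
  rw [Real.dist_eq, abs_sub_comm]
  linarith
end
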